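/- Let 𝔐, 𝔏 : ℝ^N × ℝ^N × ℝ → ℝ be C¹ functions. Let x, x̂ ∈ ℝ^N be fixed, and let x̃(λ), x̂̃(λ) : ℝ → ℝ^N be differentiable curves. Assume: (i) the closure relation 𝔐(x, x̃(λ); λ) + 𝔏(x̃(λ), x̂̃(λ); μ) − 𝔐(x̂, x̂̃(λ); λ) − 𝔏(x, x̂; μ) = 0 holds for all λ in an open interval; (ii) the corner equations ∇_{x̃}[𝔐(x, x̃; λ) + 𝔏(x̃, x̂̃(λ); μ)]|_{x̃ = x̃(λ)} = 0 and ∇_{x̂̃}[𝔏(x̃(λ), x̂̃; μ) − 𝔐(x̂, x̂̃; λ)]|_{x̂̃ = x̂̃(λ)} = 0 hold for all λ in that interval. Then ∂𝔐/∂λ(x̂, x̂̃(λ); λ) = ∂𝔐/∂λ(x, x̃(λ); λ) for all λ in the interval. -/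

import Mathlib

section Aux

variable {E : Type*} [NormedAddCommGroup E] [NormedSpace ℝ E]

/-- inclusion curve `y ↦ (a, y, c)` has the obvious derivative. -/
lemma aux_incl2 (a : E) (b : E) (c : ℝ) :
    HasFDerivAt (fun y : E => (a, y, c))
      ((0 : E →L[ℝ] E).prod ((ContinuousLinearMap.id ℝ E).prod 0)) b :=
  HasFDerivAt.prodMk (hasFDerivAt_const a b) (HasFDerivAt.prodMk (hasFDerivAt_id b) (hasFDerivAt_const c b))

lemma aux_incl1 (a : E) (b : E) (c : ℝ) :
    HasFDerivAt (fun y : E => (y, b, c))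
      ((ContinuousLinearMap.id ℝ E).prod ((0 : E →L[ℝ] E).prod 0)) a :=
  HasFDerivAt.prodMk (hasFDerivAt_id a) (HasFDerivAt.prodMk (hasFDerivAt_const b a) (hasFDerivAt_const c a))

lemma aux_partial2 (F : E × E × ℝ → ℝ) (hF : Differentiable ℝ F)
    (a b : E) (c : ℝ) (v : E) :
    fderiv ℝ (fun y => F (a, y, c)) b v = fderiv ℝ F (a, b, c) (0, v, 0) := by
  have h' : HasFDerivAt (fun y => F (a, y, c))
      ((fderiv ℝ F (a, b, c)).comp
        ((0 : E →L[ℝ] E).prod ((ContinuousLinearMap.id ℝ E).prod 0))) b :=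
    ((hF (a, b, c)).hasFDerivAt).comp b (aux_incl2 a b c)
  rw [h'.fderiv]; rfl

lemma aux_partial1 (F : E × E × ℝ → ℝ) (hF : Differentiable ℝ F)
    (a b : E) (c : ℝ) (v : E) :
    fderiv ℝ (fun y => F (y, b, c)) a v = fderiv ℝ F (a, b, c) (v, 0, 0) := by
  have h' : HasFDerivAt (fun y => F (y, b, c))
      ((fderiv ℝ F (a, b, c)).comp
        ((ContinuousLinearMap.id ℝ E).prod ((0 : E →L[ℝ] E).prod 0))) a :=
    ((hF (a, b, c)).hasFDerivAt).comp a (aux_incl1 a b c)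
  rw [h'.fderiv]; rfl

lemma aux_diff2 (F : E × E × ℝ → ℝ) (hF : Differentiable ℝ F)
    (a b : E) (c : ℝ) : DifferentiableAt ℝ (fun y => F (a, y, c)) b :=
  ((hF (a, b, c)).hasFDerivAt.comp b (aux_incl2 a b c)).differentiableAt

lemma aux_diff1 (F : E × E × ℝ → ℝ) (hF : Differentiable ℝ F)
    (a b : E) (c : ℝ) : DifferentiableAt ℝ (fun y => F (y, b, c)) a :=
  ((hF (a, b, c)).hasFDerivAt.comp a (aux_incl1 a b c)).differentiableAt

lemma aux_partial3 (F : E × E × ℝ → ℝ) (hF : Differentiable ℝ F)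
    (a b : E) (c : ℝ) :
    deriv (fun t => F (a, b, t)) c = fderiv ℝ F (a, b, c) (0, 0, 1) := by
  have hcurve : HasDerivAt (fun t : ℝ => (a, b, t)) ((0 : E), (0 : E), (1 : ℝ)) c :=
    HasDerivAt.prodMk (hasDerivAt_const c a) (HasDerivAt.prodMk (hasDerivAt_const c b) (hasDerivAt_id c))
  exact (((hF (a, b, c)).hasFDerivAt).comp_hasDerivAt c hcurve).deriv

lemma aux_split2 (F : E × E × ℝ → ℝ) (p : E × E × ℝ) (v : E) :
    fderiv ℝ F p (0, v, 1) = fderiv ℝ F p (0, v, 0) + fderiv ℝ F p (0, 0, 1) := by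
  rw [← map_add]
  congr 1
  simp [Prod.ext_iff]

lemma aux_split1 (F : E × E × ℝ → ℝ) (p : E × E × ℝ) (v w : E) :
    fderiv ℝ F p (v, w, 0) = fderiv ℝ F p (v, 0, 0) + fderiv ℝ F p (0, w, 0) := by
  rw [← map_add]
  congr 1
  simp [Prod.ext_iff]

end Aux

/-- abstract spectrality: differentiating the closure relation in the
Bäcklund parameter λ and using the corner (criticality) equations shows that
`P_G = ∂𝔐/∂λ` is invariant under the map `x ↦ x̂`. -/
theorem abstract_spectrality
    (N : ℕ) (M L : (Fin N → ℝ) → (Fin N → ℝ) → ℝ → ℝ)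
    (hM : ContDiff ℝ 1 (fun q : (Fin N → ℝ) × (Fin N → ℝ) × ℝ => M q.1 q.2.1 q.2.2))
    (hL : ContDiff ℝ 1 (fun q : (Fin N → ℝ) × (Fin N → ℝ) × ℝ => L q.1 q.2.1 q.2.2))
    (x xh : Fin N → ℝ) (xt xht : ℝ → Fin N → ℝ)
    (hxt : Differentiable ℝ xt) (hxht : Differentiable ℝ xht)
    (μ : ℝ) (s : Set ℝ) (hs : IsOpen s)
    (hclos : ∀ l ∈ s,
      M x (xt l) l + L (xt l) (xht l) μ - M xh (xht l) l - L x xh μ = 0)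
    (hc1 : ∀ l ∈ s, fderiv ℝ (fun y => M x y l + L y (xht l) μ) (xt l) = 0)
    (hc2 : ∀ l ∈ s, fderiv ℝ (fun y => L (xt l) y μ - M xh y l) (xht l) = 0) :
    ∀ l ∈ s, deriv (fun t => M xh (xht l) t) l = deriv (fun t => M x (xt l) t) l := by
  set Mf : (Fin N → ℝ) × (Fin N → ℝ) × ℝ → ℝ := fun q => M q.1 q.2.1 q.2.2 with hMf
  set Lf : (Fin N → ℝ) × (Fin N → ℝ) × ℝ → ℝ := fun q => L q.1 q.2.1 q.2.2 with hLf
  have hMd : Differentiable ℝ Mf := hM.differentiable one_ne_zero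
  have hLd : Differentiable ℝ Lf := hL.differentiable one_ne_zero
  intro l hl
  set v := deriv xt l with hv
  set w := deriv xht l with hw
  -- derivatives of the three composite terms
  have hcv : HasDerivAt xt v l := (hxt l).hasDerivAt
  have hcw : HasDerivAt xht w l := (hxht l).hasDerivAt
  have hT1 : HasDerivAt (fun t => M x (xt t) t)
      (fderiv ℝ Mf (x, xt l, l) (0, v, 1)) l := by
    have hcurve : HasDerivAt (fun t : ℝ => (x, xt t, t)) ((0 : Fin N → ℝ), v, (1 : ℝ)) l :=
      HasDerivAt.prodMk (hasDerivAt_const l x) (HasDerivAt.prodMk hcv (hasDerivAt_id l))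
    exact ((hMd (x, xt l, l)).hasFDerivAt).comp_hasDerivAt l hcurve
  have hT2 : HasDerivAt (fun t => L (xt t) (xht t) μ)
      (fderiv ℝ Lf (xt l, xht l, μ) (v, w, 0)) l := by
    have hcurve : HasDerivAt (fun t : ℝ => (xt t, xht t, μ)) (v, w, (0 : ℝ)) l :=
      HasDerivAt.prodMk hcv (HasDerivAt.prodMk hcw (hasDerivAt_const l μ))
    exact ((hLd (xt l, xht l, μ)).hasFDerivAt).comp_hasDerivAt l hcurve
  have hT3 : HasDerivAt (fun t => M xh (xht t) t)
      (fderiv ℝ Mf (xh, xht l, l) (0, w, 1)) l := by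
    have hcurve : HasDerivAt (fun t : ℝ => (xh, xht t, t)) ((0 : Fin N → ℝ), w, (1 : ℝ)) l :=
      HasDerivAt.prodMk (hasDerivAt_const l xh) (HasDerivAt.prodMk hcw (hasDerivAt_id l))
    exact ((hMd (xh, xht l, l)).hasFDerivAt).comp_hasDerivAt l hcurve
  have hD : HasDerivAt
      (fun t => M x (xt t) t + L (xt t) (xht t) μ - M xh (xht t) t - L x xh μ)
      (fderiv ℝ Mf (x, xt l, l) (0, v, 1) + fderiv ℝ Lf (xt l, xht l, μ) (v, w, 0)
        - fderiv ℝ Mf (xh, xht l, l) (0, w, 1) - 0) l :=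
    ((hT1.add hT2).sub hT3).sub (hasDerivAt_const l (L x xh μ))
  -- the closure relation says this function vanishes near l
  have hzero : (fun t => M x (xt t) t + L (xt t) (xht t) μ - M xh (xht t) t - L x xh μ)
      =ᶠ[nhds l] fun _ => (0 : ℝ) := by
    filter_upwards [hs.mem_nhds hl] with t ht using hclos t ht
  have hD0 : fderiv ℝ Mf (x, xt l, l) (0, v, 1) + fderiv ℝ Lf (xt l, xht l, μ) (v, w, 0)
      - fderiv ℝ Mf (xh, xht l, l) (0, w, 1) - 0 = 0 :=
    (hD.congr_of_eventuallyEq hzero.symm).unique (hasDerivAt_const l 0)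
  -- corner equation 1
  have hdiffM1 : DifferentiableAt ℝ (fun y => M x y l) (xt l) :=
    aux_diff2 Mf hMd x (xt l) l
  have hdiffL1 : DifferentiableAt ℝ (fun y => L y (xht l) μ) (xt l) :=
    aux_diff1 Lf hLd (xt l) (xht l) μ
  have e1 : fderiv ℝ (fun y => M x y l) (xt l) v
      + fderiv ℝ (fun y => L y (xht l) μ) (xt l) v = 0 := by
    have := hc1 l hl
    rw [fderiv_fun_add hdiffM1 hdiffL1] at this
    have := congrArg (fun f : (Fin N → ℝ) →L[ℝ] ℝ => f v) this
    simpa using this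
  have e1' : fderiv ℝ Mf (x, xt l, l) (0, v, 0)
      + fderiv ℝ Lf (xt l, xht l, μ) (v, 0, 0) = 0 := by
    rw [← aux_partial2 Mf hMd x (xt l) l v, ← aux_partial1 Lf hLd (xt l) (xht l) μ v]
    exact e1
  -- corner equation 2
  have hdiffL2 : DifferentiableAt ℝ (fun y => L (xt l) y μ) (xht l) :=
    aux_diff2 Lf hLd (xt l) (xht l) μ
  have hdiffM2 : DifferentiableAt ℝ (fun y => M xh y l) (xht l) :=
    aux_diff2 Mf hMd xh (xht l) l
  have e2 : fderiv ℝ (fun y => L (xt l) y μ) (xht l) w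
      - fderiv ℝ (fun y => M xh y l) (xht l) w = 0 := by
    have := hc2 l hl
    rw [fderiv_fun_sub hdiffL2 hdiffM2] at this
    have := congrArg (fun f : (Fin N → ℝ) →L[ℝ] ℝ => f w) this
    simpa using this
  have e2' : fderiv ℝ Lf (xt l, xht l, μ) (0, w, 0)
      - fderiv ℝ Mf (xh, xht l, l) (0, w, 0) = 0 := by
    rw [← aux_partial2 Lf hLd (xt l) (xht l) μ w, ← aux_partial2 Mf hMd xh (xht l) l w]
    exact e2
  -- decompose the total derivative and conclude
  rw [aux_split2 Mf (x, xt l, l) v, aux_split1 Lf (xt l, xht l, μ) v w,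
    aux_split2 Mf (xh, xht l, l) w] at hD0
  have g1 : deriv (fun t => M xh (xht l) t) l = fderiv ℝ Mf (xh, xht l, l) (0, 0, 1) :=
    aux_partial3 Mf hMd xh (xht l) l
  have g2 : deriv (fun t => M x (xt l) t) l = fderiv ℝ Mf (x, xt l, l) (0, 0, 1) :=
    aux_partial3 Mf hMd x (xt l) l
  rw [g1, g2]
  linarith [hD0, e1', e2']
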